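/- Let G be an m-generated group such that every element of the commutator subgroup G' is a product of at most r commutators. Then for every k ≥ 0 there is a number t = t(r, k) such that every δ_k-commutator in elements of G' is a product of at most t elements that are δ_{k+1}-commutators in elements of G. -/

import Mathlib

open scoped commutatorElement

/-- `deltaValues H k` is the set of `δ_k`-commutators in elements of the
subgroup `H`: `δ₀`-values are the elements of `H`, and `δ_{k+1}`-values are
commutators of two `δ_k`-values. -/
def deltaValues {G : Type*} [Group G] (H : Subgroup G) : ℕ → Set G
  | 0 => (H : Set G)
  | (k + 1) => {x : G | ∃ a ∈ deltaValues H k, ∃ b ∈ deltaValues H k, x = ⁅a, b⁆}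

section Aux

variable {G : Type*} [Group G]

lemma deltaValues_conj_mem (n : ℕ) (c : G) :
    ∀ x ∈ deltaValues (⊤ : Subgroup G) n, c * x * c⁻¹ ∈ deltaValues (⊤ : Subgroup G) n := by
  induction n with
  | zero => intro x _; exact Subgroup.mem_top _
  | succ n ih =>
    rintro x ⟨a, ha, b, hb, rfl⟩
    refine ⟨c * a * c⁻¹, ih a ha, c * b * c⁻¹, ih b hb, ?_⟩
    simp only [commutatorElement_def]
    group

lemma conj_list_prod (c : G) (l : List G) :
    (l.map fun y => c * y * c⁻¹).prod = c * l.prod * c⁻¹ := by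
  induction l with
  | nil => simp
  | cons x l ih => rw [List.map_cons, List.prod_cons, List.prod_cons, ih]; group

lemma comm_list_single (n : ℕ) (b : G) (hb : b ∈ deltaValues (⊤ : Subgroup G) n) :
    ∀ l : List G, (∀ y ∈ l, y ∈ deltaValues (⊤ : Subgroup G) n) →
      ∃ l' : List G, l'.length = l.length ∧
        (∀ y ∈ l', y ∈ deltaValues (⊤ : Subgroup G) (n + 1)) ∧ l'.prod = ⁅l.prod, b⁆ := by
  intro l
  induction l with
  | nil =>
    intro _
    refine ⟨[], rfl, by simp, ?_⟩
    simp
  | cons x l ih =>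
    intro hmem
    obtain ⟨l', hlen, hl'mem, hprod⟩ := ih (fun y hy => hmem y (List.mem_cons_of_mem _ hy))
    refine ⟨(l'.map fun y => x * y * x⁻¹) ++ [⁅x, b⁆], ?_, ?_, ?_⟩
    · simp [hlen]
    · intro y hy
      rcases List.mem_append.mp hy with hy | hy
      · obtain ⟨z, hz, rfl⟩ := List.mem_map.mp hy
        exact deltaValues_conj_mem (n + 1) x z (hl'mem z hz)
      · simp only [List.mem_singleton] at hy
        subst hy
        exact ⟨x, hmem x (List.mem_cons_self), b, hb, rfl⟩
    · rw [List.prod_append, conj_list_prod, hprod]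
      simp only [List.prod_cons, List.prod_nil, List.prod_singleton, mul_one, commutatorElement_def]
      group

lemma comm_list_list (n : ℕ) (l₁ : List G)
    (h₁ : ∀ y ∈ l₁, y ∈ deltaValues (⊤ : Subgroup G) n) :
    ∀ l₂ : List G, (∀ y ∈ l₂, y ∈ deltaValues (⊤ : Subgroup G) n) →
      ∃ l : List G, l.length = l₁.length * l₂.length ∧
        (∀ y ∈ l, y ∈ deltaValues (⊤ : Subgroup G) (n + 1)) ∧ l.prod = ⁅l₁.prod, l₂.prod⁆ := by
  intro l₂
  induction l₂ with
  | nil =>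
    intro _
    refine ⟨[], by simp, by simp, ?_⟩
    simp
  | cons z l₂ ih =>
    intro hmem
    obtain ⟨l, hlen, hlmem, hprod⟩ := ih (fun y hy => hmem y (List.mem_cons_of_mem _ hy))
    obtain ⟨l', hlen', hl'mem, hprod'⟩ :=
      comm_list_single n z (hmem z (List.mem_cons_self)) l₁ h₁
    refine ⟨l' ++ (l.map fun y => z * y * z⁻¹), ?_, ?_, ?_⟩
    · simp [hlen, hlen', Nat.mul_succ]; ring
    · intro y hy
      rcases List.mem_append.mp hy with hy | hy
      · exact hl'mem y hy
      · obtain ⟨w, hw, rfl⟩ := List.mem_map.mp hy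
        exact deltaValues_conj_mem (n + 1) z w (hlmem w hw)
    · rw [List.prod_append, conj_list_prod, hprod, hprod']
      simp only [List.prod_cons, commutatorElement_def]
      group

end Aux

/-- If `G` is an `m`-generated group in which every element of `G'` is a
product of at most `r` commutators, then every `δ_k`-commutator in elements of
`G'` is a product of at most `t(r, k)` many `δ_{k+1}`-commutators in elements
of `G`, where `t` depends only on `r` and `k`. -/
theorem deltaValues_in_derived_subgroup :
    ∃ t : ℕ → ℕ → ℕ, ∀ (G : Type) [Group G] (m r : ℕ),
      (∃ S : Finset G, S.card ≤ m ∧ Subgroup.closure (S : Set G) = ⊤) →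
      (∀ x ∈ commutator G, ∃ l : List G, l.length ≤ r ∧
        (∀ y ∈ l, ∃ a b : G, y = ⁅a, b⁆) ∧ l.prod = x) →
      ∀ k : ℕ, ∀ g ∈ deltaValues (commutator G) k,
        ∃ l : List G, l.length ≤ t r k ∧
          (∀ y ∈ l, y ∈ deltaValues (⊤ : Subgroup G) (k + 1)) ∧ l.prod = g := by
  refine ⟨fun r k => r ^ (2 ^ k), ?_⟩
  intro G _ m r _ hr k
  induction k with
  | zero =>
    intro g hg
    obtain ⟨l, hlen, hmem, hprod⟩ := hr g hg
    refine ⟨l, by simpa using hlen, ?_, hprod⟩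
    intro y hy
    obtain ⟨a, b, rfl⟩ := hmem y hy
    exact ⟨a, Subgroup.mem_top _, b, Subgroup.mem_top _, rfl⟩
  | succ k ih =>
    rintro g ⟨a, ha, b, hb, rfl⟩
    obtain ⟨l₁, hlen₁, hmem₁, hprod₁⟩ := ih a ha
    obtain ⟨l₂, hlen₂, hmem₂, hprod₂⟩ := ih b hb
    obtain ⟨l, hlen, hmem, hprod⟩ := comm_list_list (k + 1) l₁ hmem₁ l₂ hmem₂
    refine ⟨l, ?_, hmem, by rw [hprod, hprod₁, hprod₂]⟩
    calc l.length = l₁.length * l₂.length := hlen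
      _ ≤ r ^ 2 ^ k * r ^ 2 ^ k := Nat.mul_le_mul hlen₁ hlen₂
      _ = r ^ 2 ^ (k + 1) := by rw [← pow_add, pow_succ, mul_two]
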